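/- Fix g > 0. The lateral Borel–Laplace integrals around the Borel-plane singularity at ζ = 1 have an exponentially small discontinuity: lim_{ε→0⁺} ∫_0^∞ e^{−ζ/g} · ( 1/(1 − ζ − iε) − 1/(1 − ζ + iε) ) dζ = 2πi · e^{−1/g}, where the integral is a complex-valued Lebesgue integral over ζ ∈ (0,∞) and i is the imaginary unit. -/

import Mathlib

open MeasureTheory Set Filter Complex

lemma shift_Ioi (f : ℝ → ℝ) (a c : ℝ) :
    ∫ x in Ioi a, f (x + c) = ∫ x in Ioi (a + c), f x := by
  rw [← integral_indicator measurableSet_Ioi, ← integral_indicator measurableSet_Ioi,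
    ← integral_add_right_eq_self (Set.indicator (Ioi (a + c)) f) c]
  congr 1; ext x
  simp only [Set.indicator, mem_Ioi]
  by_cases h : a < x
  · rw [if_pos h, if_pos (by linarith)]
  · rw [if_neg h, if_neg (by intro hh; exact h (by linarith))]

lemma key_subst (g : ℝ) (ε : ℝ) (hε : 0 < ε) :
    ∫ ζ in Ioi (0 : ℝ), Real.exp (-ζ / g) * (ε / ((1 - ζ) ^ 2 + ε ^ 2))
      = ∫ x in Ioi (-(1 / ε)), Real.exp (-(1 + ε * x) / g) * (1 / (x ^ 2 + 1)) := by
  set F : ℝ → ℝ := fun ζ => Real.exp (-ζ / g) * (ε / ((1 - ζ) ^ 2 + ε ^ 2)) with hF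
  have h1 : ∀ x : ℝ, Real.exp (-(1 + ε * x) / g) * (1 / (x ^ 2 + 1)) = ε * F (ε * x + 1) := by
    intro x
    simp only [hF]
    have hx : (1 - (ε * x + 1)) ^ 2 + ε ^ 2 = ε ^ 2 * (x ^ 2 + 1) := by ring
    rw [hx]
    have hne : (x : ℝ) ^ 2 + 1 ≠ 0 := by positivity
    field_simp
    ring_nf
  simp_rw [h1]
  rw [integral_const_mul]
  have h2 : (∫ x in Ioi (-(1 / ε)), F (ε * x + 1))
      = ε⁻¹ • ∫ y in Ioi (ε * (-(1 / ε))), F (y + 1) :=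
    integral_comp_mul_left_Ioi (fun y => F (y + 1)) _ hε
  rw [h2, shift_Ioi]
  have : ε * (-(1 / ε)) + 1 = 0 := by field_simp; norm_num
  rw [this, smul_eq_mul, ← mul_assoc, mul_inv_cancel₀ hε.ne', one_mul]

lemma real_limit (g : ℝ) (hg : 0 < g) :
    Tendsto (fun ε : ℝ => ∫ ζ in Ioi (0 : ℝ),
        Real.exp (-ζ / g) * (ε / ((1 - ζ) ^ 2 + ε ^ 2)))
      (nhdsWithin 0 (Ioi (0 : ℝ))) (nhds (Real.pi * Real.exp (-1 / g))) := by
  have hev : ∀ᶠ ε in nhdsWithin 0 (Ioi (0 : ℝ)), ε ∈ Ioi (0 : ℝ) := self_mem_nhdsWithin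
  have hcongr : ∀ᶠ ε in nhdsWithin 0 (Ioi (0 : ℝ)),
      (∫ ζ in Ioi (0 : ℝ), Real.exp (-ζ / g) * (ε / ((1 - ζ) ^ 2 + ε ^ 2)))
        = ∫ x, Set.indicator (Ioi (-(1 / ε)))
            (fun x => Real.exp (-(1 + ε * x) / g) * (1 / (x ^ 2 + 1))) x := by
    filter_upwards [hev] with ε hε
    rw [key_subst g ε hε, ← integral_indicator measurableSet_Ioi]
  refine Tendsto.congr' (hcongr.mono fun ε h => h.symm) ?_
  have hπ : (Real.pi * Real.exp (-1 / g))
      = ∫ x : ℝ, Real.exp (-1 / g) * (1 / (x ^ 2 + 1)) := by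
    rw [integral_const_mul]
    have heq : (fun x : ℝ => 1 / (x ^ 2 + 1)) = fun x : ℝ => (1 + x ^ 2)⁻¹ := by
      ext x; rw [one_div, add_comm]
    rw [heq, integral_univ_inv_one_add_sq, mul_comm]
  rw [hπ]
  apply tendsto_integral_filter_of_dominated_convergence (fun x : ℝ => 1 / (x ^ 2 + 1))
  · filter_upwards [hev] with ε hε
    apply AEStronglyMeasurable.indicator _ measurableSet_Ioi
    exact (Continuous.mul (by continuity)
      (continuous_const.div (by continuity) (fun x => by positivity))).aestronglyMeasurable
  · filter_upwards [hev] with ε hε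
    refine Eventually.of_forall fun x => ?_
    by_cases hx : x ∈ Ioi (-(1 / ε))
    · rw [Set.indicator_of_mem hx]
      have h1 : (0:ℝ) < 1 + ε * x := by
        have h := mul_lt_mul_of_pos_left (mem_Ioi.mp hx) (mem_Ioi.mp hε)
        have he : ε * (-(1/ε)) = -1 := by
          rw [mul_neg, mul_one_div, div_self (mem_Ioi.mp hε).ne']
        rw [he] at h; linarith
      have h2 : Real.exp (-(1 + ε * x) / g) ≤ 1 := by
        rw [Real.exp_le_one_iff]
        apply div_nonpos_of_nonpos_of_nonneg (by linarith) hg.le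
      rw [Real.norm_eq_abs, _root_.abs_of_nonneg (by positivity : (0:ℝ) ≤ Real.exp (-(1 + ε * x) / g) * (1 / (x ^ 2 + 1)))]
      calc Real.exp (-(1 + ε * x) / g) * (1 / (x ^ 2 + 1))
          ≤ 1 * (1 / (x ^ 2 + 1)) := by
            apply mul_le_mul_of_nonneg_right h2 (by positivity)
        _ = 1 / (x ^ 2 + 1) := one_mul _
    · rw [Set.indicator_of_notMem hx]
      simp only [norm_zero]
      positivity
  · simpa [one_div, add_comm] using integrable_inv_one_add_sq
  · refine Eventually.of_forall fun x => ?_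
    have hev2 : ∀ᶠ ε in nhdsWithin (0:ℝ) (Ioi 0), x ∈ Ioi (-(1 / ε)) := by
      have : ∀ᶠ ε in nhdsWithin (0:ℝ) (Ioi 0), ε ∈ Ioo 0 (1 / (|x| + 1)) := by
        apply Ioo_mem_nhdsGT_of_mem
        constructor
        · rfl
        · positivity
      filter_upwards [this] with ε hε
      have hε0 : 0 < ε := hε.1
      have h3 : ε * (|x| + 1) < 1 := (lt_div_iff₀ (by positivity)).mp hε.2
      rw [mem_Ioi, neg_lt]
      calc -x ≤ |x| := neg_le_abs x
        _ < 1 / ε := by rw [lt_div_iff₀ hε0]; nlinarith [abs_nonneg x]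
    have htend : Tendsto (fun ε : ℝ => Real.exp (-(1 + ε * x) / g) * (1 / (x ^ 2 + 1)))
        (nhdsWithin 0 (Ioi 0)) (nhds (Real.exp (-1 / g) * (1 / (x ^ 2 + 1)))) := by
      have hc : Continuous (fun ε : ℝ => Real.exp (-(1 + ε * x) / g) * (1 / (x ^ 2 + 1))) := by
        continuity
      have h := (hc.tendsto 0).mono_left (nhdsWithin_le_nhds (s := Ioi (0:ℝ)))
      simpa using h
    refine Tendsto.congr' ?_ htend
    filter_upwards [hev2] with ε hε
    rw [Set.indicator_of_mem hε]

theorem stokes_discontinuity (g : ℝ) (hg : 0 < g) :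
    Tendsto
      (fun ε : ℝ =>
        ∫ ζ in Ioi (0 : ℝ),
          Complex.exp (-(ζ : ℂ) / (g : ℂ)) *
            (1 / (1 - (ζ : ℂ) - (ε : ℂ) * Complex.I) -
             1 / (1 - (ζ : ℂ) + (ε : ℂ) * Complex.I)))
      (nhdsWithin 0 (Ioi (0 : ℝ)))
      (nhds (2 * Real.pi * Complex.I * Complex.exp (-(1 : ℂ) / (g : ℂ)))) := by
  have hG := real_limit g hg
  have hev : ∀ᶠ ε in nhdsWithin (0:ℝ) (Ioi 0), ε ∈ Ioi (0:ℝ) := self_mem_nhdsWithin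
  have key : ∀ᶠ ε in nhdsWithin (0:ℝ) (Ioi 0),
      (2 * Complex.I) * (((∫ ζ in Ioi (0 : ℝ),
            Real.exp (-ζ / g) * (ε / ((1 - ζ) ^ 2 + ε ^ 2))) : ℝ) : ℂ)
        = ∫ ζ in Ioi (0 : ℝ),
            Complex.exp (-(ζ : ℂ) / (g : ℂ)) *
              (1 / (1 - (ζ : ℂ) - (ε : ℂ) * Complex.I) -
               1 / (1 - (ζ : ℂ) + (ε : ℂ) * Complex.I)) := by
    filter_upwards [hev] with ε hε
    have hε0 : (0:ℝ) < ε := hε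
    have hint : (((∫ ζ in Ioi (0:ℝ), Real.exp (-ζ / g) * (ε / ((1 - ζ) ^ 2 + ε ^ 2)) : ℝ)) : ℂ)
        = ∫ ζ in Ioi (0:ℝ), ((Real.exp (-ζ / g) * (ε / ((1 - ζ) ^ 2 + ε ^ 2)) : ℝ) : ℂ) :=
      (integral_ofReal (𝕜 := ℂ)).symm
    rw [hint, ← integral_const_mul]
    refine setIntegral_congr_fun measurableSet_Ioi fun ζ _ => ?_
    have hD : ((1 - ζ) ^ 2 + ε ^ 2 : ℝ) ≠ 0 := by positivity
    have hne1 : (1 - (ζ:ℂ) - (ε:ℂ) * Complex.I) ≠ 0 := by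
      intro h
      have him := congrArg Complex.im h
      simp at him
      exact hε0.ne' him
    have hne2 : (1 - (ζ:ℂ) + (ε:ℂ) * Complex.I) ≠ 0 := by
      intro h
      have him := congrArg Complex.im h
      simp at him
      exact hε0.ne' him
    have he : Complex.exp (-(ζ:ℂ) / (g:ℂ)) = ((Real.exp (-ζ / g) : ℝ) : ℂ) := by
      rw [Complex.ofReal_exp]
      congr 1
      push_cast
      ring
    have hden : (1 - (ζ:ℂ) - (ε:ℂ) * Complex.I) * (1 - (ζ:ℂ) + (ε:ℂ) * Complex.I)
        = (((1 - ζ) ^ 2 + ε ^ 2 : ℝ) : ℂ) := by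
      push_cast
      linear_combination (-(ε:ℂ) ^ 2) * Complex.I_sq
    rw [he, div_sub_div _ _ hne1 hne2, hden]
    push_cast
    have hDc : (((1 - ζ) ^ 2 + ε ^ 2 : ℝ) : ℂ) ≠ 0 := by exact_mod_cast hD
    push_cast at hDc
    field_simp
    ring
  refine Tendsto.congr' key ?_
  have hc : Tendsto (fun ε : ℝ => (2 * Complex.I) * (((∫ ζ in Ioi (0 : ℝ),
        Real.exp (-ζ / g) * (ε / ((1 - ζ) ^ 2 + ε ^ 2))) : ℝ) : ℂ))
      (nhdsWithin 0 (Ioi (0:ℝ)))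
      (nhds ((2 * Complex.I) * ((Real.pi * Real.exp (-1 / g) : ℝ) : ℂ))) := by
    exact (Complex.continuous_ofReal.tendsto _).comp hG |>.const_mul _
  convert hc using 2
  rw [Complex.ofReal_mul, Complex.ofReal_exp]
  have : -(1:ℂ) / (g:ℂ) = ((-1 / g : ℝ) : ℂ) := by push_cast; ring
  rw [this]
  ring
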